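/- For x, y, z real with sinh x sinh y sinh z ≠ 0, one has 1 − σ^π(x,y,z) + σ^π(x,z,y) + σ^π(z,y,x) = 4 cosh((x+y+z)/2) cosh((−x+y+z)/2) cosh((x−y+z)/2) sinh((x+y−z)/2) / (sinh x sinh y sinh z), where σ^π(a,b,c) = (cosh a cosh b + cosh c)/(sinh a sinh b). -/

import Mathlib

noncomputable def sigmaPi (a b c : ℝ) : ℝ :=
  (Real.cosh a * Real.cosh b + Real.cosh c) / (Real.sinh a * Real.sinh b)

set_option maxHeartbeats 2000000 in
theorem rho_pi_identity (x y z : ℝ)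
    (h : Real.sinh x * Real.sinh y * Real.sinh z ≠ 0) :
    1 - sigmaPi x y z + sigmaPi x z y + sigmaPi z y x =
      4 * Real.cosh ((x + y + z) / 2) * Real.cosh ((-x + y + z) / 2) *
          Real.cosh ((x - y + z) / 2) * Real.sinh ((x + y - z) / 2) /
        (Real.sinh x * Real.sinh y * Real.sinh z) := by
  have hx : Real.sinh x ≠ 0 := fun h' => h (by rw [h']; ring)
  have hy : Real.sinh y ≠ 0 := fun h' => h (by rw [h']; ring)
  have hz : Real.sinh z ≠ 0 := fun h' => h (by rw [h']; ring)
  clear h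
  set a := Real.exp (x/2) with hadef
  set b := Real.exp (y/2) with hbdef
  set c := Real.exp (z/2) with hcdef
  have ha : a ≠ 0 := Real.exp_ne_zero _
  have hb : b ≠ 0 := Real.exp_ne_zero _
  have hc : c ≠ 0 := Real.exp_ne_zero _
  have ex : Real.exp x = a ^ 2 := by rw [hadef, sq, ← Real.exp_add]; norm_num
  have ey : Real.exp y = b ^ 2 := by rw [hbdef, sq, ← Real.exp_add]; norm_num
  have ez : Real.exp z = c ^ 2 := by rw [hcdef, sq, ← Real.exp_add]; norm_num
  have Sx : Real.sinh x = (a^4 - 1) / (2*a^2) := by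
    rw [Real.sinh_eq, Real.exp_neg, ex]; field_simp
  have Sy : Real.sinh y = (b^4 - 1) / (2*b^2) := by
    rw [Real.sinh_eq, Real.exp_neg, ey]; field_simp
  have Sz : Real.sinh z = (c^4 - 1) / (2*c^2) := by
    rw [Real.sinh_eq, Real.exp_neg, ez]; field_simp
  have Cx : Real.cosh x = (a^4 + 1) / (2*a^2) := by
    rw [Real.cosh_eq, Real.exp_neg, ex]; field_simp
  have Cy : Real.cosh y = (b^4 + 1) / (2*b^2) := by
    rw [Real.cosh_eq, Real.exp_neg, ey]; field_simp
  have Cz : Real.cosh z = (c^4 + 1) / (2*c^2) := by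
    rw [Real.cosh_eq, Real.exp_neg, ez]; field_simp
  have E1 : Real.exp ((x + y + z)/2) = a * b * c := by
    rw [show (x+y+z)/2 = x/2 + y/2 + z/2 by ring, Real.exp_add, Real.exp_add,
      hadef, hbdef, hcdef]
  have E2 : Real.exp ((-x + y + z)/2) = b * c / a := by
    rw [show (-x+y+z)/2 = y/2 + z/2 - x/2 by ring, Real.exp_sub, Real.exp_add,
      hadef, hbdef, hcdef]
  have E3 : Real.exp ((x - y + z)/2) = a * c / b := by
    rw [show (x-y+z)/2 = x/2 + z/2 - y/2 by ring, Real.exp_sub, Real.exp_add,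
      hadef, hbdef, hcdef]
  have E4 : Real.exp ((x + y - z)/2) = a * b / c := by
    rw [show (x+y-z)/2 = x/2 + y/2 - z/2 by ring, Real.exp_sub, Real.exp_add,
      hadef, hbdef, hcdef]
  have C1 : Real.cosh ((x + y + z)/2) = (a^2*b^2*c^2 + 1) / (2*(a*b*c)) := by
    rw [Real.cosh_eq, Real.exp_neg, E1]; field_simp
  have C2 : Real.cosh ((-x + y + z)/2) = (b^2*c^2 + a^2) / (2*(a*b*c)) := by
    rw [Real.cosh_eq, Real.exp_neg, E2]; field_simp
  have C3 : Real.cosh ((x - y + z)/2) = (a^2*c^2 + b^2) / (2*(a*b*c)) := by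
    rw [Real.cosh_eq, Real.exp_neg, E3]; field_simp
  have S4 : Real.sinh ((x + y - z)/2) = (a^2*b^2 - c^2) / (2*(a*b*c)) := by
    rw [Real.sinh_eq, Real.exp_neg, E4]; field_simp
  have hx' : a^4 - 1 ≠ 0 := by
    intro hcon; exact hx (by rw [Sx, hcon, zero_div])
  have hy' : b^4 - 1 ≠ 0 := by
    intro hcon; exact hy (by rw [Sy, hcon, zero_div])
  have hz' : c^4 - 1 ≠ 0 := by
    intro hcon; exact hz (by rw [Sz, hcon, zero_div])
  unfold sigmaPi
  rw [Sx, Sy, Sz, Cx, Cy, Cz, C1, C2, C3, S4]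
  field_simp
  ring
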